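/- Let M be a smooth manifold, n ≥ 1, and let {·,·} be an affine Jacobi bracket on the trivial bundle M×ℝⁿ. Then for every basic function F ∈ C^∞(M×ℝⁿ,ℝ) and every affine function a ∈ C^∞(M×ℝⁿ,ℝ), the function {F,a} − F·{1,a} is basic. -/

import Mathlib

open scoped Manifold

/-- A Jacobi bracket on the smooth functions (those satisfying the predicate `S`)
of a space `N`: an ℝ-bilinear antisymmetric bracket satisfying the Jacobi identity
and the generalized Leibniz rule. -/
structure JacobiBracket (N : Type*) (S : (N → ℝ) → Prop) where
  br : (N → ℝ) → (N → ℝ) → N → ℝ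
  smooth_br : ∀ f g, S f → S g → S (br f g)
  add_left : ∀ f g h, S f → S g → S h → br (f + g) h = br f h + br g h
  smul_left : ∀ (c : ℝ) (f g : N → ℝ), S f → S g → br (c • f) g = c • br f g
  antisymm : ∀ f g, S f → S g → br f g = -br g f
  jacobi : ∀ f g h, S f → S g → S h →
    br f (br g h) + br g (br h f) + br h (br f g) = 0
  leibniz : ∀ f g h, S f → S g → S h →
    br f (g * h) = br f g * h + g * br f h - g * h * br f 1

/-- A function on the trivial bundle `M × ℝⁿ` is fibrewise affine if on each fibre
it is an affine map `ℝⁿ → ℝ`. -/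
def IsFibAffine {M : Type*} {n : ℕ} (F : M × (Fin n → ℝ) → ℝ) : Prop :=
  ∀ x : M, ∃ (μ : (Fin n → ℝ) →ₗ[ℝ] ℝ) (c : ℝ), ∀ v, F (x, v) = μ v + c

section

variable {EM : Type*} [NormedAddCommGroup EM] [NormedSpace ℝ EM] [FiniteDimensional ℝ EM]
  {HM : Type*} [TopologicalSpace HM] (IM : ModelWithCorners ℝ EM HM)
  (M : Type*) [TopologicalSpace M] [ChartedSpace HM M] [IsManifold IM (⊤ : ℕ∞) M]
  (n : ℕ)

/-- Smooth real functions on the total space of the trivial bundle `M × ℝⁿ`. -/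
def SmoothBdl : (M × (Fin n → ℝ) → ℝ) → Prop :=
  fun F => ContMDiff (IM.prod (𝓘(ℝ, Fin n → ℝ))) 𝓘(ℝ, ℝ) (⊤ : ℕ∞) F

/-- Basic functions on the trivial bundle `M × ℝⁿ`: pullbacks of smooth functions
on `M` by the projection. -/
def IsBasic : (M × (Fin n → ℝ) → ℝ) → Prop :=
  fun F => ∃ f : M → ℝ, ContMDiff IM 𝓘(ℝ, ℝ) (⊤ : ℕ∞) f ∧ F = fun p => f p.1

end

/-- for an affine Jacobi bracket on the trivial bundle `M × ℝⁿ`, `n ≥ 1`,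
and any basic `F` and affine `a`, the function `{F,a} - F⬝{1,a}` is basic. -/
theorem stmt0
    {EM : Type*} [NormedAddCommGroup EM] [NormedSpace ℝ EM] [FiniteDimensional ℝ EM]
    {HM : Type*} [TopologicalSpace HM] (IM : ModelWithCorners ℝ EM HM)
    (M : Type*) [TopologicalSpace M] [ChartedSpace HM M] [IsManifold IM (⊤ : ℕ∞) M]
    (n : ℕ) (hn : 1 ≤ n)
    (J : JacobiBracket (M × (Fin n → ℝ)) (SmoothBdl IM M n))
    (haff : ∀ a b, SmoothBdl IM M n a → SmoothBdl IM M n b →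
      IsFibAffine a → IsFibAffine b → IsFibAffine (J.br a b))
    (F a : M × (Fin n → ℝ) → ℝ)
    (hF : SmoothBdl IM M n F) (hFbasic : IsBasic IM M n F)
    (ha : SmoothBdl IM M n a) (haaff : IsFibAffine a) :
    IsBasic IM M n (fun p => J.br F a p - F p * J.br 1 a p) := by
  classical
  obtain ⟨f, hf, hFeq⟩ := hFbasic
  have hone : SmoothBdl IM M n (1 : M × (Fin n → ℝ) → ℝ) := contMDiff_const
  have h1a := J.smooth_br 1 a hone ha
  have hFa := J.smooth_br F a hF ha
  have hGs : SmoothBdl IM M n (fun p => J.br F a p - F p * J.br 1 a p) :=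
    hFa.sub (hF.mul h1a)
  -- affine facts
  have haF : IsFibAffine F := fun x => ⟨0, f x, fun v => by simp [hFeq]⟩
  have h1aff : IsFibAffine (1 : M × (Fin n → ℝ) → ℝ) := fun x => ⟨0, 1, fun v => by simp⟩
  have hGaff : ∀ x : M, ∃ (μ : (Fin n → ℝ) →ₗ[ℝ] ℝ) (c : ℝ), ∀ v,
      J.br F a (x, v) - F (x, v) * J.br 1 a (x, v) = μ v + c := by
    intro x
    obtain ⟨μ1, c1, h1⟩ := haff F a hF ha haF haaff x
    obtain ⟨μ2, c2, h2⟩ := haff 1 a hone ha h1aff haaff x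
    refine ⟨μ1 - f x • μ2, c1 - f x * c2, fun v => ?_⟩
    have hFx : F (x, v) = f x := by rw [hFeq]
    rw [h1 v, h2 v, hFx]
    simp only [LinearMap.sub_apply, LinearMap.smul_apply, smul_eq_mul]
    ring
  -- fibre coordinate functions
  have hu : ∀ j : Fin n, SmoothBdl IM M n (fun p : M × (Fin n → ℝ) => p.2 j) := fun j =>
    (ContinuousLinearMap.proj j : (Fin n → ℝ) →L[ℝ] ℝ).contMDiff.comp contMDiff_snd
  have huaff : ∀ j : Fin n, IsFibAffine (fun p : M × (Fin n → ℝ) => p.2 j) := fun j x =>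
    ⟨LinearMap.proj j, 0, fun v => by simp⟩
  -- key step: for each j and x, the function v ↦ v j * G (x, v) is affine in v
  have key : ∀ (j : Fin n) (x : M), ∃ (ν : (Fin n → ℝ) →ₗ[ℝ] ℝ) (d : ℝ), ∀ v,
      v j * (J.br F a (x, v) - F (x, v) * J.br 1 a (x, v)) = ν v + d := by
    intro j x
    have hsu := hu j
    have huF : SmoothBdl IM M n ((fun p : M × (Fin n → ℝ) => p.2 j) * F) := hsu.mul hF
    have huFaff : IsFibAffine ((fun p : M × (Fin n → ℝ) => p.2 j) * F) := fun y =>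
      ⟨f y • LinearMap.proj j, 0, fun v => by
        simp [hFeq, LinearMap.smul_apply, smul_eq_mul]; ring⟩
    obtain ⟨ν1, c1, h1⟩ := haff a (fun p : M × (Fin n → ℝ) => p.2 j) ha hsu haaff (huaff j) x
    obtain ⟨ν2, c2, h2⟩ := haff a ((fun p : M × (Fin n → ℝ) => p.2 j) * F) ha huF haaff huFaff x
    have hL := J.leibniz a (fun p : M × (Fin n → ℝ) => p.2 j) F ha hsu hF
    have hA1 := J.antisymm a F ha hF
    have hA2 := J.antisymm a 1 ha hone
    refine ⟨f x • ν1 - ν2, f x * c1 - c2, fun v => ?_⟩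
    have hLp := congrFun hL (x, v)
    have hA1p := congrFun hA1 (x, v)
    have hA2p := congrFun hA2 (x, v)
    simp only [Pi.mul_apply, Pi.add_apply, Pi.sub_apply, Pi.neg_apply] at hLp hA1p hA2p
    have hFx : F (x, v) = f x := by rw [hFeq]
    rw [h1 v, h2 v, hFx, hA1p, hA2p] at hLp
    simp only [LinearMap.sub_apply, LinearMap.smul_apply, smul_eq_mul]
    rw [hFx]
    linear_combination hLp
  -- G is constant on fibres
  have hconst : ∀ (x : M) (v : Fin n → ℝ),
      J.br F a (x, v) - F (x, v) * J.br 1 a (x, v)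
        = J.br F a (x, 0) - F (x, 0) * J.br 1 a (x, 0) := by
    intro x v
    obtain ⟨μ, c, hμ⟩ := hGaff x
    have hμ0 : ∀ j : Fin n, μ (fun k => if j = k then 1 else 0) = 0 := by
      intro j
      obtain ⟨ν, d, hν⟩ := key j x
      set w : Fin n → ℝ := fun k => if j = k then 1 else 0 with hw
      have hwj : w j = 1 := by simp [hw]
      have h0 := hν 0
      have h1 := hν w
      have h2 := hν ((2 : ℝ) • w)
      rw [hμ] at h0 h1 h2
      simp only [Pi.zero_apply, Pi.smul_apply, smul_eq_mul, map_zero, map_smul, hwj,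
        mul_one, one_mul, zero_mul, zero_add, add_zero] at h0 h1 h2
      linarith [h0, h1, h2]
    have hμzero : ∀ w : Fin n → ℝ, μ w = 0 := by
      intro w
      rw [LinearMap.pi_apply_eq_sum_univ μ w]
      refine Finset.sum_eq_zero fun i _ => ?_
      rw [hμ0 i, smul_zero]
    rw [hμ v, hμ 0, hμzero v, hμzero 0]
  exact ⟨fun x => J.br F a (x, 0) - F (x, 0) * J.br 1 a (x, 0),
    hGs.comp (contMDiff_id.prodMk contMDiff_const),
    funext fun p => hconst p.1 p.2⟩
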